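/- The path Γ of the previous statement is continuous in t, satisfies Γ(0) = C and Γ(1) = C′, and projects to the constant path at (o₁,o₂) under π_{n+2,2}. Moreover Γ depends continuously on the pair (C,C′) of collinear configurations sharing obstacles (o₁,o₂). -/

import Mathlib

noncomputable section

/-- `ℝ^{2ℓ}` with coordinates indexed by `Fin ℓ × Fin 2`. -/
abbrev EucPairs (l : ℕ) := EuclideanSpace ℝ (Fin l × Fin 2)

/-- The map `ν(x₁,y₁,…,x_ℓ,y_ℓ) = (−y₁,x₁,…,−y_ℓ,x_ℓ)`. -/
def nuField (l : ℕ) : EucPairs l → EucPairs l :=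
  fun v => WithLp.toLp 2 (fun ij => if ij.2 = 0 then -v (ij.1, 1) else v (ij.1, 0))

lemma nuField_continuous (l : ℕ) : Continuous (nuField l) := by
  unfold nuField
  apply (PiLp.continuous_toLp 2 _).comp
  apply continuous_pi
  intro ij
  split
  · exact ((continuous_apply _).comp (PiLp.continuous_ofLp 2 _)).neg
  · exact (continuous_apply _).comp (PiLp.continuous_ofLp 2 _)

variable {l n : ℕ}

/-- The three-stage path of the `i`-th robot (`i` runs over `1,…,n`, here
encoded by `(i : Fin n)` with label `i+1`): rise off the line by `i·v`,
translate to above the target, then descend.  Here `v = ν(e_C)` with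
`e_C = (o₂−o₁)/‖o₂−o₁‖`. -/
def gammaRobot (o₁ o₂ : EucPairs l) (x x' : Fin n → EucPairs l)
    (i : Fin n) (t : ℝ) : EucPairs l :=
  let v := nuField l (‖o₂ - o₁‖⁻¹ • (o₂ - o₁))
  if t ≤ 1 / 3 then x i + (3 * t * ((i : ℕ) + 1 : ℝ)) • v
  else if t ≤ 2 / 3 then x i + (((i : ℕ) + 1 : ℝ)) • v + (3 * t - 1) • (x' i - x i)
  else x' i + ((((i : ℕ) + 1 : ℝ)) * (3 - 3 * t)) • v


/-- The full path `Γ(t) = (o₁, o₂, γ₁(t), …, γ_n(t))`. -/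
def gammaFull (q : EucPairs l × EucPairs l × (Fin n → EucPairs l) × (Fin n → EucPairs l))
    (t : ℝ) : Fin (2 + n) → EucPairs l :=
  Fin.append ![q.1, q.2.1] (fun i => gammaRobot q.1 q.2.1 q.2.2.1 q.2.2.2 i t)

/-- The set of pairs of collinear configurations sharing the obstacle pair. -/
def collinearPairs (l n : ℕ) :
    Set (EucPairs l × EucPairs l × (Fin n → EucPairs l) × (Fin n → EucPairs l)) :=
  {q | q.1 ≠ q.2.1 ∧ (∀ i, ∃ s : ℝ, q.2.2.1 i = q.1 + s • (q.2.1 - q.1)) ∧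
       (∀ i, ∃ s : ℝ, q.2.2.2 i = q.1 + s • (q.2.1 - q.1))}

/-- The generic three-stage map, as a function of `(v, a, b, t)`. -/
def robotF (c : ℝ) (p : EucPairs l × EucPairs l × EucPairs l × ℝ) : EucPairs l :=
  if p.2.2.2 ≤ 1 / 3 then p.2.1 + (3 * p.2.2.2 * c) • p.1
  else if p.2.2.2 ≤ 2 / 3 then p.2.1 + c • p.1 + (3 * p.2.2.2 - 1) • (p.2.2.1 - p.2.1)
  else p.2.2.1 + (c * (3 - 3 * p.2.2.2)) • p.1

lemma robotF_continuous (c : ℝ) : Continuous (robotF (l := l) c) := by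
  unfold robotF
  apply Continuous.if_le
  · fun_prop
  · apply Continuous.if_le
    · fun_prop
    · fun_prop
    · fun_prop
    · fun_prop
    · intro p hp
      rw [hp]
      norm_num
      abel
  · fun_prop
  · fun_prop
  · intro p hp
    rw [hp, if_pos (by norm_num : (1:ℝ)/3 ≤ 2/3)]
    norm_num

lemma gammaRobot_eq (o₁ o₂ : EucPairs l) (x x' : Fin n → EucPairs l) (i : Fin n) (t : ℝ) :
    gammaRobot o₁ o₂ x x' i t =
      robotF ((i : ℕ) + 1 : ℝ)
        (nuField l (‖o₂ - o₁‖⁻¹ • (o₂ - o₁)), x i, x' i, t) := rfl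

lemma gammaFull_contOn (l n : ℕ) :
    ContinuousOn
      (fun z : (EucPairs l × EucPairs l × (Fin n → EucPairs l) × (Fin n → EucPairs l)) × ℝ =>
        gammaFull z.1 z.2)
      (collinearPairs l n ×ˢ Set.univ) := by
  rw [continuousOn_pi]
  intro j
  refine Fin.addCases (fun k => ?_) (fun i => ?_) j
  · simp only [gammaFull, Fin.append_left]
    fin_cases k
    · exact (continuous_fst.fst).continuousOn
    · exact (continuous_fst.snd.fst).continuousOn
  · simp only [gammaFull, Fin.append_right, gammaRobot_eq]
    apply (robotF_continuous _).comp_continuousOn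
    apply ContinuousOn.prodMk
    · apply (nuField_continuous l).comp_continuousOn
      apply ContinuousOn.fun_smul
      · apply ContinuousOn.inv₀
        · fun_prop
        · intro z hz
          exact norm_ne_zero_iff.mpr (sub_ne_zero_of_ne (Ne.symm hz.1.1))
      · fun_prop
    · exact ContinuousOn.prodMk (by fun_prop) (ContinuousOn.prodMk (by fun_prop) (by fun_prop))

/-- `Γ` is continuous in `t`, runs from `C` to `C′`, keeps the obstacles
`(o₁,o₂)` fixed (so it projects to the constant path under `π_{n+2,2}`), and
depends continuously on the pair `(C,C′)` of collinear configurations sharing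
the obstacles. -/
theorem gammaFull_section_properties (l n : ℕ) :
    (∀ q ∈ collinearPairs l n, Continuous (gammaFull q)) ∧
    (∀ q ∈ collinearPairs l n,
      gammaFull q 0 = Fin.append ![q.1, q.2.1] q.2.2.1 ∧
      gammaFull q 1 = Fin.append ![q.1, q.2.1] q.2.2.2) ∧
    (∀ q ∈ collinearPairs l n, ∀ t : ℝ, ∀ k : Fin 2,
      gammaFull q t (Fin.castAdd n k) = ![q.1, q.2.1] k) ∧
    ContinuousOn (fun z : _ × ℝ => gammaFull z.1 z.2)
      (collinearPairs l n ×ˢ Set.univ) := by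
  refine ⟨?_, ?_, ?_, gammaFull_contOn l n⟩
  · intro q hq
    have h : ContinuousOn (fun t : ℝ => gammaFull q t) (Set.univ : Set ℝ) :=
      (gammaFull_contOn l n).comp
        ((by fun_prop : Continuous fun t : ℝ => (q, t)).continuousOn)
        (fun t _ => Set.mk_mem_prod hq (Set.mem_univ t))
    exact continuousOn_univ.mp h
  · intro q hq
    constructor
    · unfold gammaFull
      congr 1
      funext i
      norm_num [gammaRobot]
    · unfold gammaFull
      congr 1
      funext i
      norm_num [gammaRobot]
  · intro q hq t k
    simp [gammaFull, Fin.append_left]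

end
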